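/- Let k₀ = π/2 and α = c²k₀² - 2. If u_o : ℝ → ℝ is continuous, u_o'' exists and is continuous on ℝ∖[-1,1], there exists ν < 0 such that x ↦ e^{-ν|x|}(u_o(x) - sgn(x)cos(k₀x)) and its first derivative are bounded on ℝ∖[-1,1] (with corresponding bound on the second derivative), and c² k₀ > 1, then ∫_ℝ sin(k₀x)(c²u_o''(x) - Δ_D u_o(x) + α u_o(x)) dx = -2c²k₀ + 2 < 0. -/

import Mathlib

open Real Filter

private lemma stmt4_sin_deriv (x : ℝ) :
    HasDerivAt (fun x => Real.sin (π/2*x)) ((π/2) * Real.cos (π/2*x)) x := by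
  have h := (Real.hasDerivAt_sin (π/2*x)).comp x ((hasDerivAt_id x).const_mul (π/2))
  simpa [Function.comp_def, mul_comm (Real.cos _)] using h

private lemma stmt4_cos_deriv (x : ℝ) :
    HasDerivAt (fun x => Real.cos (π/2*x)) (-((π/2) * Real.sin (π/2*x))) x := by
  have h := (Real.hasDerivAt_cos (π/2*x)).comp x ((hasDerivAt_id x).const_mul (π/2))
  simpa [Function.comp_def, mul_comm (Real.sin _)] using h

private lemma stmt4_H_deriv (y : ℝ) :
    HasDerivAt (fun y : ℝ => y/2 + Real.sin (π*y)/(2*π)) (Real.cos (π/2*y)^2) y := by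
  have h1 : HasDerivAt (fun y : ℝ => Real.sin (π*y)) (π * Real.cos (π*y)) y := by
    have h := (Real.hasDerivAt_sin (π*y)).comp y ((hasDerivAt_id y).const_mul π)
    simpa [Function.comp_def, mul_comm (Real.cos _)] using h
  have h := ((hasDerivAt_id y).div_const 2).add (h1.div_const (2*π))
  replace h : HasDerivAt (fun y : ℝ => y/2 + Real.sin (π*y)/(2*π)) (1/2 + π * Real.cos (π*y) / (2*π)) y := h
  convert h using 1
  rw [Real.cos_sq]
  have h2 : 2*(π/2*y) = π*y := by ring
  rw [h2]
  have hπ : π ≠ 0 := Real.pi_ne_zero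
  field_simp

private lemma stmt4_cos_sq (a : ℝ) : (∫ y in (a-1)..(a+1), Real.cos (π/2*y)^2) = 1 := by
  rw [intervalIntegral.integral_eq_sub_of_hasDerivAt (fun y _ => stmt4_H_deriv y)
    (Continuous.intervalIntegrable (by fun_prop) _ _)]
  have h1 : Real.sin (π*(a+1)) = -Real.sin (π*a) := by rw [mul_add, mul_one, Real.sin_add_pi]
  have h2 : Real.sin (π*(a-1)) = -Real.sin (π*a) := by rw [mul_sub, mul_one, Real.sin_sub_pi]
  rw [h1, h2]
  ring

private lemma stmt4_shift1 (u : ℝ → ℝ) (R : ℝ) :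
    (∫ x in (-R)..R, Real.sin (π/2*x) * u (x+1))
      = ∫ y in (-R+1)..(R+1), -(Real.cos (π/2*y) * u y) := by
  have h := intervalIntegral.integral_comp_add_right (a := -R) (b := R)
      (fun y => Real.sin (π/2*(y-1)) * u y) 1
  simp only [add_sub_cancel_right] at h
  rw [h]
  apply intervalIntegral.integral_congr
  intro y _
  show Real.sin (π/2*(y-1)) * u y = -(Real.cos (π/2*y) * u y)
  rw [mul_sub, mul_one, Real.sin_sub, Real.cos_pi_div_two, Real.sin_pi_div_two]
  ring

private lemma stmt4_shift2 (u : ℝ → ℝ) (R : ℝ) :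
    (∫ x in (-R)..R, Real.sin (π/2*x) * u (x-1))
      = ∫ y in (-R-1)..(R-1), Real.cos (π/2*y) * u y := by
  have h := intervalIntegral.integral_comp_sub_right (a := -R) (b := R)
      (fun y => Real.sin (π/2*(y+1)) * u y) 1
  simp only [sub_add_cancel] at h
  rw [h]
  apply intervalIntegral.integral_congr
  intro y _
  show Real.sin (π/2*(y+1)) * u y = Real.cos (π/2*y) * u y
  rw [mul_add, mul_one, Real.sin_add, Real.cos_pi_div_two, Real.sin_pi_div_two]
  ring

private lemma stmt4_main (c : ℝ) (u : ℝ → ℝ) (hC2 : ContDiff ℝ 2 u)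
    (ν C : ℝ) (hν : ν < 0)
    (hdec : ∀ x : ℝ, 1 < |x| →
        |u x - Real.sign x * Real.cos (π / 2 * x)| ≤ C * Real.exp (ν * |x|) ∧
        |deriv u x - Real.sign x * (-(π / 2) * Real.sin (π / 2 * x))| ≤ C * Real.exp (ν * |x|) ∧
        |deriv (deriv u) x - Real.sign x * (-(π / 2) ^ 2 * Real.cos (π / 2 * x))|
          ≤ C * Real.exp (ν * |x|)) :
    Filter.Tendsto
      (fun R : ℝ => ∫ x in (-R)..R,
        Real.sin (π / 2 * x) *
          (c ^ 2 * deriv (deriv u) x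
            - (u (x + 1) - 2 * u x + u (x - 1)) + (c ^ 2 * (π / 2) ^ 2 - 2) * u x))
      Filter.atTop (nhds (-2 * c ^ 2 * (π / 2) + 2)) := by
  have hu : Continuous u := hC2.continuous
  have hd1 : ContDiff ℝ 1 (deriv u) :=
    ((contDiff_succ_iff_deriv (n := 1)).mp (by exact_mod_cast hC2)).2.2
  have hcont1 : Continuous (deriv u) := hd1.continuous
  have hcont2 : Continuous (deriv (deriv u)) := hd1.continuous_deriv le_rfl
  have hC0 : 0 ≤ C := by
    have h := (hdec 2 (by rw [abs_of_pos] <;> norm_num)).1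
    nlinarith [(abs_nonneg _).trans h, Real.exp_pos (ν * |(2:ℝ)|)]
  have hexp : Tendsto (fun R : ℝ => C * Real.exp (ν * R)) atTop (nhds 0) := by
    have h1 : Tendsto (fun R : ℝ => ν * R) atTop atBot := tendsto_id.const_mul_atTop_of_neg hν
    have h2 := (Real.tendsto_exp_atBot.comp h1).const_mul C
    simpa using h2
  set G : ℝ → ℝ := fun x => Real.sin (π/2*x) * deriv u x - (π/2) * (Real.cos (π/2*x) * u x)
    with hGdef
  have hGd : ∀ x, HasDerivAt G
      (Real.sin (π/2*x) * deriv (deriv u) x + (π/2)^2 * (Real.sin (π/2*x) * u x)) x := by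
    intro x
    have h1 : HasDerivAt u (deriv u x) x := ((hC2.differentiable (by norm_num)) x).hasDerivAt
    have h2 : HasDerivAt (deriv u) (deriv (deriv u) x) x := ((hd1.differentiable (by norm_num)) x).hasDerivAt
    have h := ((stmt4_sin_deriv x).mul h2).sub (((stmt4_cos_deriv x).mul h1).const_mul (π/2))
    replace h : HasDerivAt G ((π/2) * Real.cos (π/2*x) * deriv u x + Real.sin (π/2*x) * deriv (deriv u) x
      - (π/2) * (-((π/2) * Real.sin (π/2*x)) * u x + Real.cos (π/2*x) * deriv u x)) x := h
    convert h using 1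
    ring
  have hg1 : Continuous (fun x =>
      Real.sin (π/2*x) * deriv (deriv u) x + (π/2)^2 * (Real.sin (π/2*x) * u x)) := by fun_prop
  have hg2 : Continuous (fun x => Real.sin (π/2*x) * u (x+1)) := by fun_prop
  have hg3 : Continuous (fun x => Real.sin (π/2*x) * u (x-1)) := by fun_prop
  have hgcu : Continuous (fun y => Real.cos (π/2*y) * u y) := by fun_prop
  have hgc2 : Continuous (fun y : ℝ => Real.cos (π/2*y)^2) := by fun_prop
  have hI1 : ∀ R : ℝ, (∫ x in (-R)..R,
      (Real.sin (π/2*x) * deriv (deriv u) x + (π/2)^2 * (Real.sin (π/2*x) * u x)))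
      = G R - G (-R) := fun R =>
    intervalIntegral.integral_eq_sub_of_hasDerivAt (fun x _ => hGd x)
      (hg1.intervalIntegrable (μ := MeasureTheory.volume) _ _)
  -- the key exact identity
  have key : ∀ R : ℝ, (∫ x in (-R)..R,
        Real.sin (π / 2 * x) *
          (c ^ 2 * deriv (deriv u) x
            - (u (x + 1) - 2 * u x + u (x - 1)) + (c ^ 2 * (π / 2) ^ 2 - 2) * u x))
      = c^2 * (G R - G (-R)) +
        ((∫ y in (R-1)..(R+1), Real.cos (π/2*y) * u y)
          - (∫ y in (-R-1)..(-R+1), Real.cos (π/2*y) * u y)) := by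
    intro R
    have e1 : (∫ x in (-R)..R,
        Real.sin (π / 2 * x) *
          (c ^ 2 * deriv (deriv u) x
            - (u (x + 1) - 2 * u x + u (x - 1)) + (c ^ 2 * (π / 2) ^ 2 - 2) * u x))
        = c^2 * (∫ x in (-R)..R,
            (Real.sin (π/2*x) * deriv (deriv u) x + (π/2)^2 * (Real.sin (π/2*x) * u x)))
          - (∫ x in (-R)..R, Real.sin (π/2*x) * u (x+1))
          - (∫ x in (-R)..R, Real.sin (π/2*x) * u (x-1)) := by
      rw [← intervalIntegral.integral_const_mul,
        ← intervalIntegral.integral_sub ((hg1.intervalIntegrable (-R) R).const_mul (c^2))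
          (hg2.intervalIntegrable _ _),
        ← intervalIntegral.integral_sub
          (((hg1.intervalIntegrable (-R) R).const_mul (c^2)).sub (hg2.intervalIntegrable _ _))
          (hg3.intervalIntegrable _ _)]
      apply intervalIntegral.integral_congr
      intro x _
      dsimp only
      ring
    rw [e1, hI1 R, stmt4_shift1 u R, stmt4_shift2 u R, intervalIntegral.integral_neg]
    have hA := intervalIntegral.integral_add_adjacent_intervals
      (μ := MeasureTheory.volume)
      (a := -R-1) (b := -R+1) (c := R+1) (f := fun y => Real.cos (π/2*y) * u y)
      (hgcu.intervalIntegrable _ _) (hgcu.intervalIntegrable _ _)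
    have hB := intervalIntegral.integral_add_adjacent_intervals
      (μ := MeasureTheory.volume)
      (a := -R-1) (b := R-1) (c := R+1) (f := fun y => Real.cos (π/2*y) * u y)
      (hgcu.intervalIntegrable _ _) (hgcu.intervalIntegrable _ _)
    linarith [hA, hB]
  -- limit of the boundary term
  have hGlim : Tendsto (fun R => G R - G (-R)) atTop (nhds (-(2*(π/2)))) := by
    have h0 : Tendsto (fun R => G R - G (-R) - (-(2*(π/2)))) atTop (nhds 0) := by
      apply squeeze_zero_norm' (a := fun R => (2+π) * (C * Real.exp (ν * R)))
      · filter_upwards [eventually_gt_atTop 1] with R hR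
        have hRpos : (0:ℝ) < R := by linarith
        obtain ⟨h1, h2, -⟩ := hdec R (by rwa [abs_of_pos hRpos])
        obtain ⟨h1', h2', -⟩ := hdec (-R) (by rw [abs_neg, abs_of_pos hRpos]; exact hR)
        rw [Real.sign_of_pos hRpos, abs_of_pos hRpos] at h1 h2
        rw [Real.sign_of_neg (by linarith : -R < 0), abs_neg, abs_of_pos hRpos] at h1' h2'
        set A := deriv u R - 1 * (-(π / 2) * Real.sin (π / 2 * R)) with hA
        set B := deriv u (-R) - -1 * (-(π / 2) * Real.sin (π / 2 * -R)) with hB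
        set D := u R - 1 * Real.cos (π / 2 * R) with hD
        set E := u (-R) - -1 * Real.cos (π / 2 * -R) with hE
        have hkey : G R - G (-R) - (-(2*(π/2)))
            = Real.sin (π/2*R) * (A + B) - (π/2) * (Real.cos (π/2*R) * (D - E)) := by
          simp only [hGdef, hA, hB, hD, hE, mul_neg, Real.sin_neg, Real.cos_neg]
          linear_combination (-π) * Real.sin_sq_add_cos_sq (π/2*R)
        rw [Real.norm_eq_abs, hkey]
        have hCE : 0 ≤ C * Real.exp (ν * R) := le_trans (abs_nonneg _) h1
        have hsb : |Real.sin (π/2*R)| ≤ 1 :=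
          abs_le.mpr ⟨Real.neg_one_le_sin _, Real.sin_le_one _⟩
        have hcb : |Real.cos (π/2*R)| ≤ 1 :=
          abs_le.mpr ⟨Real.neg_one_le_cos _, Real.cos_le_one _⟩
        have t1 : |Real.sin (π/2*R) * (A + B)| ≤ |A| + |B| := by
          rw [abs_mul]
          calc |Real.sin (π/2*R)| * |A + B| ≤ 1 * |A + B| :=
                mul_le_mul_of_nonneg_right hsb (abs_nonneg _)
            _ = |A + B| := one_mul _
            _ ≤ |A| + |B| := abs_add_le A B
        have t2 : |Real.cos (π/2*R) * (D - E)| ≤ |D| + |E| := by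
          rw [abs_mul]
          calc |Real.cos (π/2*R)| * |D - E| ≤ 1 * |D - E| :=
                mul_le_mul_of_nonneg_right hcb (abs_nonneg _)
            _ = |D - E| := one_mul _
            _ ≤ |D| + |E| := abs_sub D E
        have t3 : |Real.sin (π/2*R) * (A + B) - (π/2) * (Real.cos (π/2*R) * (D - E))|
            ≤ |Real.sin (π/2*R) * (A + B)| + (π/2) * |Real.cos (π/2*R) * (D - E)| := by
          have h := abs_sub (Real.sin (π/2*R) * (A + B)) ((π/2) * (Real.cos (π/2*R) * (D - E)))
          rwa [abs_mul (π/2), abs_of_pos (by positivity : (0:ℝ) < π/2)] at h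
        have t4 : (π/2) * |Real.cos (π/2*R) * (D - E)| ≤ π * (C * Real.exp (ν*R)) := by
          calc (π/2) * |Real.cos (π/2*R) * (D - E)|
              ≤ (π/2) * (C * Real.exp (ν*R) + C * Real.exp (ν*R)) := by
                apply mul_le_mul_of_nonneg_left _ (by positivity)
                exact t2.trans (add_le_add h1 h1')
            _ = π * (C * Real.exp (ν*R)) := by ring
        have t5 : |Real.sin (π/2*R) * (A + B)|
            ≤ C * Real.exp (ν*R) + C * Real.exp (ν*R) := t1.trans (add_le_add h2 h2')
        nlinarith [t3, t4, t5]
      · have h := hexp.const_mul (2+π)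
        simpa using h
    have h1 := h0.add (tendsto_const_nhds (x := -(2*(π/2))))
    simpa using h1
  -- limit of the right tail integral
  have hTp : Tendsto (fun R : ℝ => ∫ y in (R-1)..(R+1), Real.cos (π/2*y) * u y)
      atTop (nhds 1) := by
    have h0 : Tendsto (fun R : ℝ => (∫ y in (R-1)..(R+1), Real.cos (π/2*y) * u y) - 1)
        atTop (nhds 0) := by
      apply squeeze_zero_norm' (a := fun R => C * Real.exp (ν * (R-1)) * 2)
      · filter_upwards [eventually_gt_atTop 2] with R hR
        have heq : (∫ y in (R-1)..(R+1), Real.cos (π/2*y) * u y) - 1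
            = ∫ y in (R-1)..(R+1), Real.cos (π/2*y) * (u y - Real.cos (π/2*y)) := by
          have h : (∫ y in (R-1)..(R+1), Real.cos (π/2*y) * (u y - Real.cos (π/2*y)))
              = (∫ y in (R-1)..(R+1), Real.cos (π/2*y) * u y)
                - ∫ y in (R-1)..(R+1), Real.cos (π/2*y)^2 := by
            rw [← intervalIntegral.integral_sub (hgcu.intervalIntegrable _ _)
              (hgc2.intervalIntegrable _ _)]
            apply intervalIntegral.integral_congr
            intro y _
            dsimp only
            ring
          rw [h, stmt4_cos_sq R]
        rw [Real.norm_eq_abs, heq]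
        have hbound : ∀ y ∈ Set.uIoc (R-1) (R+1),
            ‖Real.cos (π/2*y) * (u y - Real.cos (π/2*y))‖ ≤ C * Real.exp (ν*(R-1)) := by
          intro y hy
          rw [Set.uIoc_of_le (by linarith : R-1 ≤ R+1)] at hy
          have hy1 : (1:ℝ) < y := by linarith [hy.1]
          have h := (hdec y (by rwa [abs_of_pos (by linarith)])).1
          rw [Real.sign_of_pos (by linarith), one_mul, abs_of_pos (by linarith : (0:ℝ) < y)] at h
          rw [Real.norm_eq_abs, abs_mul]
          have hcb : |Real.cos (π/2*y)| ≤ 1 :=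
            abs_le.mpr ⟨Real.neg_one_le_cos _, Real.cos_le_one _⟩
          have hmono : Real.exp (ν * y) ≤ Real.exp (ν * (R-1)) := by
            apply Real.exp_le_exp.mpr
            nlinarith [mul_pos (neg_pos.mpr hν) (sub_pos.mpr hy.1)]
          calc |Real.cos (π/2*y)| * |u y - Real.cos (π/2*y)|
              ≤ 1 * (C * Real.exp (ν*y)) :=
                mul_le_mul hcb h (abs_nonneg _) zero_le_one
            _ = C * Real.exp (ν*y) := one_mul _
            _ ≤ C * Real.exp (ν*(R-1)) := mul_le_mul_of_nonneg_left hmono hC0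
        have hb := intervalIntegral.norm_integral_le_of_norm_le_const hbound
        rw [show (R+1) - (R-1) = 2 by ring] at hb
        simpa using hb
      · have h := (hexp.comp (tendsto_atTop_add_const_right atTop (-1) tendsto_id)).mul_const 2
        simpa [Function.comp_def, sub_eq_add_neg] using h
    have h1 := h0.add (tendsto_const_nhds (x := (1:ℝ)))
    simpa using h1
  -- limit of the left tail integral
  have hTm : Tendsto (fun R : ℝ => ∫ y in (-R-1)..(-R+1), Real.cos (π/2*y) * u y)
      atTop (nhds (-1)) := by
    have h0 : Tendsto (fun R : ℝ => (∫ y in (-R-1)..(-R+1), Real.cos (π/2*y) * u y) - (-1))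
        atTop (nhds 0) := by
      apply squeeze_zero_norm' (a := fun R => C * Real.exp (ν * (R-1)) * 2)
      · filter_upwards [eventually_gt_atTop 2] with R hR
        have heq : (∫ y in (-R-1)..(-R+1), Real.cos (π/2*y) * u y) - (-1)
            = ∫ y in (-R-1)..(-R+1), Real.cos (π/2*y) * (u y + Real.cos (π/2*y)) := by
          have h : (∫ y in (-R-1)..(-R+1), Real.cos (π/2*y) * (u y + Real.cos (π/2*y)))
              = (∫ y in (-R-1)..(-R+1), Real.cos (π/2*y) * u y)
                + ∫ y in (-R-1)..(-R+1), Real.cos (π/2*y)^2 := by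
            rw [← intervalIntegral.integral_add (hgcu.intervalIntegrable _ _)
              (hgc2.intervalIntegrable _ _)]
            apply intervalIntegral.integral_congr
            intro y _
            dsimp only
            ring
          rw [h, stmt4_cos_sq (-R)]
          ring
        rw [Real.norm_eq_abs, heq]
        have hbound : ∀ y ∈ Set.uIoc (-R-1) (-R+1),
            ‖Real.cos (π/2*y) * (u y + Real.cos (π/2*y))‖ ≤ C * Real.exp (ν*(R-1)) := by
          intro y hy
          rw [Set.uIoc_of_le (by linarith : -R-1 ≤ -R+1)] at hy
          have hy1 : y < -1 := by linarith [hy.2]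
          have h := (hdec y (by rw [abs_of_neg (by linarith)]; linarith)).1
          rw [Real.sign_of_neg (by linarith), abs_of_neg (by linarith : y < 0),
            neg_one_mul, sub_neg_eq_add] at h
          rw [Real.norm_eq_abs, abs_mul]
          have hcb : |Real.cos (π/2*y)| ≤ 1 :=
            abs_le.mpr ⟨Real.neg_one_le_cos _, Real.cos_le_one _⟩
          have hmono : Real.exp (ν * -y) ≤ Real.exp (ν * (R-1)) := by
            apply Real.exp_le_exp.mpr
            nlinarith [mul_nonneg (le_of_lt (neg_pos.mpr hν))
              (by linarith [hy.2] : (0:ℝ) ≤ -y - (R-1))]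
          calc |Real.cos (π/2*y)| * |u y + Real.cos (π/2*y)|
              ≤ 1 * (C * Real.exp (ν * -y)) :=
                mul_le_mul hcb h (abs_nonneg _) zero_le_one
            _ = C * Real.exp (ν * -y) := one_mul _
            _ ≤ C * Real.exp (ν*(R-1)) := mul_le_mul_of_nonneg_left hmono hC0
        have hb := intervalIntegral.norm_integral_le_of_norm_le_const hbound
        rw [show (-R+1) - (-R-1) = 2 by ring] at hb
        simpa using hb
      · have h := (hexp.comp (tendsto_atTop_add_const_right atTop (-1) tendsto_id)).mul_const 2
        simpa [Function.comp_def, sub_eq_add_neg] using h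
    have h1 := h0.add (tendsto_const_nhds (x := (-1:ℝ)))
    simpa using h1
  have hfinal := (hGlim.const_mul (c^2)).add (hTp.sub hTm)
  have heval : c^2 * (-(2*(π/2))) + (1 - (-1)) = -2*c^2*(π/2) + 2 := by ring
  rw [heval] at hfinal
  exact hfinal.congr (fun R => (key R).symm)

/-- With `k₀ = π/2`, `α = c²k₀² - 2` and `c²k₀ > 1`, if `u_o : ℝ → ℝ` is `C²`
and converges exponentially (together with its first two derivatives) to
`sgn(x) cos(k₀ x)` outside `[-1,1]`, then the improper integral
`∫ sin(k₀x)(c²u_o'' - Δ_D u_o + α u_o) dx` equals `-2c²k₀ + 2 < 0`. -/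
theorem stmt_4 (c : ℝ) (u_o : ℝ → ℝ)
    (hC2 : ContDiff ℝ 2 u_o)
    (hck : 1 < c ^ 2 * (π / 2))
    (hdecay : ∃ ν C : ℝ, ν < 0 ∧
      ∀ x : ℝ, 1 < |x| →
        |u_o x - Real.sign x * Real.cos (π / 2 * x)| ≤ C * Real.exp (ν * |x|) ∧
        |deriv u_o x - Real.sign x * (-(π / 2) * Real.sin (π / 2 * x))|
          ≤ C * Real.exp (ν * |x|) ∧
        |deriv (deriv u_o) x - Real.sign x * (-(π / 2) ^ 2 * Real.cos (π / 2 * x))|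
          ≤ C * Real.exp (ν * |x|)) :
    let k₀ : ℝ := π / 2
    let α : ℝ := c ^ 2 * k₀ ^ 2 - 2
    Filter.Tendsto
      (fun R : ℝ => ∫ x in (-R)..R,
        Real.sin (k₀ * x) *
          (c ^ 2 * deriv (deriv u_o) x
            - (u_o (x + 1) - 2 * u_o x + u_o (x - 1)) + α * u_o x))
      Filter.atTop (nhds (-2 * c ^ 2 * k₀ + 2)) ∧
    -2 * c ^ 2 * k₀ + 2 < 0 := by
  intro k₀ α
  obtain ⟨ν, C, hν, hdec⟩ := hdecay
  constructor
  · exact stmt4_main c u_o hC2 ν C hν hdec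
  · show -2 * c ^ 2 * (π / 2) + 2 < 0
    linarith
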